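/- The number of parking functions with m cars and n spots (m ≤ n) is (n-m+1)(n+1)^{m-1}. -/

import Mathlib

/-- `π : [m] → [n]` (values in `{1,…,n}`) is a parking function in `PF(m,n)`:
for every `i` with `n-m+1 ≤ i ≤ n`, `#{k : π k ≤ i} ≥ m-n+i`
(stated additively to avoid truncated subtraction; for `i ≤ n-m` the
inequality is vacuous, so quantifying over all `i ≤ n` is equivalent). -/
def IsPF (m n : ℕ) (π : Fin m → ℕ) : Prop :=
  (∀ k, 1 ≤ π k ∧ π k ≤ n) ∧
  ∀ i, i ≤ n → m + i ≤ (Finset.univ.filter (fun k => π k ≤ i)).card + n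

attribute [local instance] Classical.propDecidable

open Finset in
def EmpP (N m : ℕ) (F : Fin m → ZMod N) (a : ZMod N) : Prop :=
  ∀ t, 1 ≤ t → t ≤ N → (Finset.univ.filter (fun k => (a - F k).val < t)).card < t

open Finset in
lemma record_count (N m : ℕ) (hm : m < N) (h : ℕ → ℕ)
    (hper : ∀ j, h (j + N) = h j)
    (hsum : ∑ j ∈ Finset.range N, h j = m) :
    ((Finset.range N).filter
      (fun t => ∀ s, 1 ≤ s → s ≤ N → ∑ j ∈ Finset.range s, h (t + j) < s)).card = N - m := by
  classical
  set G : ℕ → ℤ := fun t => (∑ j ∈ Finset.range t, (h j : ℤ)) - t with hG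
  have Gstep : ∀ t, G (t + 1) = G t + h t - 1 := by
    intro t
    simp only [hG, Finset.sum_range_succ]
    push_cast
    ring
  have G0 : G 0 = 0 := by simp [hG]
  -- periodicity
  have Gper : ∀ t, G (t + N) = G t + m - N := by
    intro t
    induction t with
    | zero =>
      simp only [Nat.zero_add, G0]
      simp only [hG]
      rw [← hsum]
      push_cast
      ring
    | succ t ih =>
      have e1 : t + 1 + N = (t + N) + 1 := by ring
      rw [e1, Gstep, ih, Gstep, hper]
      ring
  have Gk : ∀ s k, G (s + k * N) = G s - k * ((N : ℤ) - m) := by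
    intro s k
    induction k with
    | zero => simp
    | succ k ih =>
      have e1 : s + (k + 1) * N = (s + k * N) + N := by ring
      rw [e1, Gper, ih]
      push_cast
      ring
  have hNm : (1 : ℤ) ≤ (N : ℤ) - m := by
    have := hm; omega
  have Gmod : ∀ t, G t = G (t % N) - ((t / N : ℕ) : ℤ) * ((N : ℤ) - m) := by
    intro t
    conv_lhs => rw [show t = t % N + (t / N) * N by rw [Nat.mod_add_div']]
    exact Gk _ _
  -- maximum
  have hN0 : 0 < N := by omega
  have hne : ((Finset.range N).image G).Nonempty := ⟨G 0, Finset.mem_image.2 ⟨0, by simpa using hN0, rfl⟩⟩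
  set M : ℤ := ((Finset.range N).image G).max' hne with hMdef
  have hM : ∀ t, G t ≤ M := by
    intro t
    have h1 : G (t % N) ≤ M := Finset.le_max' _ _ (Finset.mem_image.2 ⟨t % N, Finset.mem_range.2 (Nat.mod_lt _ hN0), rfl⟩)
    have h2 := Gmod t
    have h3 : (0:ℤ) ≤ ((t / N : ℕ) : ℤ) * ((N : ℤ) - m) :=
      mul_nonneg (Nat.cast_nonneg _) (by omega)
    omega
  have hMmem : ∃ s, s < N ∧ G s = M := by
    obtain ⟨s, hs, hGs⟩ := Finset.mem_image.1 (Finset.max'_mem _ hne)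
    exact ⟨s, Finset.mem_range.1 hs, hGs⟩
  -- bound on times where G t ≥ v
  have hbound : ∀ (v : ℤ) (t : ℕ), v ≤ G t → t ≤ N * (M - v).toNat + N := by
    intro v t hv
    have h2 := Gmod t
    have h3 : G (t % N) ≤ M := hM _
    have h4 : ((t / N : ℕ) : ℤ) ≤ M - v := by
      nlinarith [Nat.cast_nonneg (α := ℤ) (t / N), hNm]
    have h5 : (t / N : ℕ) ≤ (M - v).toNat := by omega
    have h6 := Nat.mod_lt t hN0
    have h7 := Nat.div_add_mod t N
    calc t = N * (t / N) + t % N := (Nat.div_add_mod t N).symm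
    _ ≤ N * (M - v).toNat + N := by
        have := Nat.mul_le_mul_left N h5
        omega
  set T : ℤ → ℕ := fun v => Nat.findGreatest (fun t => v ≤ G t) (N * (M - v).toNat + N) with hT
  have hT1 : ∀ v, v ≤ M → v ≤ G (T v) := by
    intro v hv
    obtain ⟨s, hs, hGs⟩ := hMmem
    exact Nat.findGreatest_spec (P := fun t => v ≤ G t)
      (le_trans (le_of_lt hs) (by omega)) (show v ≤ G s by rw [hGs]; exact hv)
  have hT2 : ∀ v t, T v < t → G t < v := by
    intro v t ht
    by_contra hcon
    push_neg at hcon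
    have hb := hbound v t hcon
    exact Nat.findGreatest_is_greatest ht hb hcon
  -- intermediate value lemma
  have IVT : ∀ (v : ℤ) (d t : ℕ), v ≤ G t → G (t + d) ≤ v → ∃ t', t ≤ t' ∧ G t' = v := by
    intro v d
    induction d with
    | zero => intro t h1 h2; exact ⟨t, le_refl _, le_antisymm (by simpa using h2) h1⟩
    | succ d ih =>
      intro t h1 h2
      rcases eq_or_lt_of_le h1 with he | hlt
      · exact ⟨t, le_refl _, he.symm⟩
      · have hstep : G t - 1 ≤ G (t + 1) := by
          rw [Gstep]
          have : (0 : ℤ) ≤ h t := Nat.cast_nonneg _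
          omega
        have h1' : v ≤ G (t + 1) := by omega
        have h2' : G ((t + 1) + d) ≤ v := by
          have : (t + 1) + d = t + (d + 1) := by ring
          rw [this]; exact h2
        obtain ⟨t', ht', hGt'⟩ := ih (t + 1) h1' h2'
        exact ⟨t', by omega, hGt'⟩
  have hTval : ∀ v, v ≤ M → G (T v) = v := by
    intro v hv
    have h1 := hT1 v hv
    rcases eq_or_lt_of_le h1 with he | hlt
    · exact he.symm
    · exfalso
      set k := (G (T v) - v).toNat with hk
      have hk1 : (k : ℤ) = G (T v) - v := by omega
      have h2 : G (T v + k * N) ≤ v := by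
        rw [Gk]
        nlinarith [Nat.cast_nonneg (α := ℤ) k, hNm]
      obtain ⟨t', ht', hGt'⟩ := IVT v (k * N) (T v) (le_of_lt hlt) h2
      rcases eq_or_lt_of_le ht' with he' | hlt'
      · rw [← he'] at hGt'; omega
      · have := hT2 v t' hlt'; omega
  -- record characterization
  have hsumG : ∀ t s, (∑ j ∈ Finset.range s, (h (t + j) : ℤ)) = G (t + s) - G t + s := by
    intro t s
    induction s with
    | zero => simp
    | succ s ih =>
      rw [Finset.sum_range_succ, ih, show t + (s + 1) = (t + s) + 1 by ring, Gstep]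
      push_cast
      ring
  have hRec : ∀ t, (∀ s, 1 ≤ s → s ≤ N → ∑ j ∈ Finset.range s, h (t + j) < s)
      ↔ (∀ t', t < t' → G t' < G t) := by
    intro t
    constructor
    · intro hr t' ht'
      set d := t' - t - 1 with hd
      have ht'e : t' = t + (d % N + 1) + (d / N) * N := by
        have h1 := Nat.div_add_mod d N
        have h2 : d / N * N = N * (d / N) := Nat.mul_comm _ _
        omega
      have h1 : G t' = G (t + (d % N + 1)) - ((d / N : ℕ) : ℤ) * ((N:ℤ) - m) := by
        rw [ht'e, Gk]
      have h2 : G (t + (d % N + 1)) < G t := by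
        have hs1 : 1 ≤ d % N + 1 := by omega
        have hs2 : d % N + 1 ≤ N := by have := Nat.mod_lt d hN0; omega
        have h3 := hr (d % N + 1) hs1 hs2
        have h4 := hsumG t (d % N + 1)
        have h5 : (∑ j ∈ Finset.range (d % N + 1), (h (t + j) : ℤ)) < (d % N + 1 : ℕ) := by
          exact_mod_cast Nat.cast_lt.mpr h3
        push_cast at h4 h5 ⊢
        omega
      have h6 : (0:ℤ) ≤ ((d / N : ℕ) : ℤ) * ((N : ℤ) - m) :=
        mul_nonneg (Nat.cast_nonneg _) (by omega)
      omega
    · intro hr s hs1 hs2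
      have h1 : G (t + s) < G t := hr (t + s) (by omega)
      have h4 := hsumG t s
      have : (∑ j ∈ Finset.range s, (h (t + j) : ℤ)) < s := by omega
      exact_mod_cast this
  -- the bijection with range (N - m)
  rw [show N - m = (Finset.range (N - m)).card from (Finset.card_range _).symm]
  symm
  refine Finset.card_bij (fun c _ => T (M - (c : ℤ))) ?_ ?_ ?_
  · -- maps into the filter set
    intro c hc
    have hc' : c < N - m := Finset.mem_range.1 hc
    have hvle : M - (c : ℤ) ≤ M := by omega
    have hval := hTval (M - (c : ℤ)) hvle
    have hTlt : T (M - (c : ℤ)) < N := by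
      by_contra hcon
      push_neg at hcon
      have he : T (M - (c : ℤ)) = (T (M - (c : ℤ)) - N) + N := by omega
      have h1 := Gper (T (M - (c : ℤ)) - N)
      rw [← he, hval] at h1
      have h2 := hM (T (M - (c : ℤ)) - N)
      have hcZ : (c : ℤ) < (N : ℤ) - m := by omega
      omega
    simp only [Finset.mem_filter, Finset.mem_range]
    refine ⟨hTlt, ?_⟩
    rw [hRec]
    intro t' ht'
    have := hT2 (M - (c : ℤ)) t' ht'
    omega
  · -- injective
    intro c1 hc1 c2 hc2 he
    have he' : T (M - (c1 : ℤ)) = T (M - (c2 : ℤ)) := he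
    have h1 := hTval (M - (c1 : ℤ)) (by have := Finset.mem_range.1 hc1; omega)
    have h2 := hTval (M - (c2 : ℤ)) (by have := Finset.mem_range.1 hc2; omega)
    rw [he'] at h1
    have : (c1 : ℤ) = c2 := by omega
    exact_mod_cast this
  · -- surjective
    intro t ht
    simp only [Finset.mem_filter, Finset.mem_range] at ht
    obtain ⟨htN', hrec⟩ := ht
    rw [hRec] at hrec
    have hGtM : G t ≤ M := hM t
    have hbig : M - ((N : ℤ) - m) < G t := by
      by_contra hcon
      push_neg at hcon
      have hvle : G t + ((N:ℤ) - m) ≤ M := by omega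
      have hval := hTval _ hvle
      have h2 : G (T (G t + ((N:ℤ) - m)) + N) = G t := by
        rw [Gper, hval]; ring
      have h3 : t < T (G t + ((N:ℤ) - m)) + N := by omega
      have := hrec _ h3
      omega
    refine ⟨(M - G t).toNat, Finset.mem_range.2 (by omega), ?_⟩
    show T (M - ((M - G t).toNat : ℤ)) = t
    have he : M - ((M - G t).toNat : ℤ) = G t := by omega
    rw [he]
    -- T (G t) = t
    have hle : t ≤ T (G t) := Nat.le_findGreatest (hbound _ _ (le_refl _)) (le_refl _)
    rcases eq_or_lt_of_le hle with he' | hlt'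
    · exact he'.symm
    · exfalso
      have h1 := hTval (G t) hGtM
      have := hrec _ hlt'
      omega

open Finset in
lemma emp_card (N m : ℕ) [NeZero N] (hm : m < N) (F : Fin m → ZMod N) :
    (Finset.univ.filter (fun a => EmpP N m F a)).card = N - m := by
  classical
  have hN0 : 0 < N := Nat.pos_of_ne_zero (NeZero.ne N)
  have hval_cast : ∀ {j : ℕ}, j < N → ((j : ZMod N)).val = j := fun {j} hj =>
    ZMod.val_cast_of_lt hj
  have hcast_val : ∀ x : ZMod N, ((x.val : ℕ) : ZMod N) = x := fun x =>
    ZMod.natCast_rightInverse x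
  set h : ℕ → ℕ := fun j =>
    (Finset.univ.filter (fun k => F k = -1 - (j : ZMod N))).card with hh
  have hper : ∀ j, h (j + N) = h j := by
    intro j
    simp only [hh]
    congr 2
    have : ((j + N : ℕ) : ZMod N) = (j : ZMod N) := by
      push_cast [ZMod.natCast_self]
      ring
    rw [this]
  have hsum : ∑ j ∈ Finset.range N, h j = m := by
    have e1 : ∑ j ∈ Finset.range N, h j
        = ∑ a : ZMod N, (Finset.univ.filter (fun k => F k = a)).card := by
      refine Finset.sum_nbij' (fun j => -1 - (j : ZMod N)) (fun a => (-1 - a).val) ?_ ?_ ?_ ?_ ?_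
      · intro j _; exact Finset.mem_univ _
      · intro a _
        apply Finset.mem_range.2
        exact ZMod.val_lt _
      · intro j hj
        have hj' : j < N := Finset.mem_range.1 hj
        show ((-1 : ZMod N) - (-1 - (j : ZMod N))).val = j
        have : (-1 : ZMod N) - (-1 - (j : ZMod N)) = (j : ZMod N) := by ring
        rw [this, hval_cast hj']
      · intro a _
        show (-1 : ZMod N) - (((-1 - a).val : ℕ) : ZMod N) = a
        rw [hcast_val]
        ring
      · intro j _
        rfl
    rw [e1]
    rw [← Finset.card_eq_sum_card_fiberwise (f := F) (t := Finset.univ)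
      (fun k _ => Finset.mem_univ (F k))]
    simp
  -- the fiber-sum identity
  have hkey : ∀ (a : ZMod N) (s : ℕ), s ≤ N →
      (Finset.univ.filter (fun k => (a - F k).val < s)).card
        = ∑ j ∈ Finset.range s, (Finset.univ.filter (fun k => F k = a - (j : ZMod N))).card := by
    intro a s hs
    rw [← Finset.card_biUnion]
    · congr 1
      ext k
      simp only [Finset.mem_filter, Finset.mem_biUnion, Finset.mem_range, Finset.mem_univ,
        true_and]
      constructor
      · intro hk
        refine ⟨(a - F k).val, hk, ?_⟩
        rw [hcast_val]
        ring
      · rintro ⟨j, hj, hFk⟩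
        rw [hFk]
        have : a - (a - (j : ZMod N)) = (j : ZMod N) := by ring
        rw [this, hval_cast (lt_of_lt_of_le hj hs)]
        exact hj
    · intro j hj j' hj' hne
      simp only [Finset.coe_range, Set.mem_Iio] at hj hj'
      rw [Function.onFun, Finset.disjoint_left]
      intro k hk1 hk2
      simp only [Finset.mem_filter, Finset.mem_univ, true_and] at hk1 hk2
      apply hne
      have h1 : a - (j : ZMod N) = a - (j' : ZMod N) := hk1.symm.trans hk2
      have h2 : (j : ZMod N) = (j' : ZMod N) := by
        have := sub_right_inj.mp h1
        exact this
      calc j = ((j : ZMod N)).val := (hval_cast (lt_of_lt_of_le hj hs)).symm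
        _ = ((j' : ZMod N)).val := by rw [h2]
        _ = j' := hval_cast (lt_of_lt_of_le hj' hs)
  -- EmpP at -1 - t  ↔  record at t
  have hiff : ∀ t : ℕ, t < N →
      (EmpP N m F (-1 - (t : ZMod N)) ↔
        ∀ s, 1 ≤ s → s ≤ N → ∑ j ∈ Finset.range s, h (t + j) < s) := by
    intro t ht
    have hsum_eq : ∀ s, s ≤ N →
        (Finset.univ.filter (fun k => ((-1 - (t : ZMod N)) - F k).val < s)).card
          = ∑ j ∈ Finset.range s, h (t + j) := by
      intro s hs
      rw [hkey _ s hs]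
      apply Finset.sum_congr rfl
      intro j _
      simp only [hh]
      congr 2
      push_cast
      ring
    constructor
    · intro hE s hs1 hs2
      rw [← hsum_eq s hs2]
      exact hE s hs1 hs2
    · intro hr s hs1 hs2
      rw [hsum_eq s hs2]
      exact hr s hs1 hs2
  -- bijection between the two filters
  have hcard : (Finset.univ.filter (fun a => EmpP N m F a)).card
      = ((Finset.range N).filter
          (fun t => ∀ s, 1 ≤ s → s ≤ N → ∑ j ∈ Finset.range s, h (t + j) < s)).card := by
    symm
    refine Finset.card_bij (fun t _ => -1 - (t : ZMod N)) ?_ ?_ ?_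
    · intro t ht
      simp only [Finset.mem_filter, Finset.mem_range] at ht
      simp only [Finset.mem_filter, Finset.mem_univ, true_and]
      exact (hiff t ht.1).2 ht.2
    · intro t1 ht1 t2 ht2 he
      simp only [Finset.mem_filter, Finset.mem_range] at ht1 ht2
      have he' : (-1 : ZMod N) - (t1 : ZMod N) = -1 - (t2 : ZMod N) := he
      have h2 : (t1 : ZMod N) = (t2 : ZMod N) := sub_right_inj.mp he'
      calc t1 = ((t1 : ZMod N)).val := (hval_cast ht1.1).symm
        _ = ((t2 : ZMod N)).val := by rw [h2]
        _ = t2 := hval_cast ht2.1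
    · intro a ha
      simp only [Finset.mem_filter, Finset.mem_univ, true_and] at ha
      have haval : ((-1 : ZMod N) - (((-1 - a).val : ℕ) : ZMod N)) = a := by
        rw [hcast_val]; ring
      refine ⟨(-1 - a).val, ?_, haval⟩
      simp only [Finset.mem_filter, Finset.mem_range]
      refine ⟨ZMod.val_lt _, ?_⟩
      have h1 := (hiff _ (ZMod.val_lt (-1 - a))).1
      rw [haval] at h1
      exact h1 ha
  rw [hcard]
  exact record_count N m hm h hper hsum

open Finset in
lemma my_split {α : Type*} [Fintype α] (p q : α → Prop) [DecidablePred p] [DecidablePred q]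
    (h : ∀ a, q a ↔ ¬ p a) :
    (Finset.univ.filter p).card + (Finset.univ.filter q).card = Fintype.card α := by
  rw [← Finset.card_union_of_disjoint]
  · rw [← Finset.card_univ]
    congr 1
    ext a
    by_cases hp : p a <;> simp [hp, h]
  · rw [Finset.disjoint_left]
    intro a ha hb
    simp only [Finset.mem_filter] at ha hb
    exact (h a).1 hb.2 ha.2

lemma emp_iff_isPF (m n : ℕ) (hmn : m ≤ n) (F : Fin m → ZMod (n + 1)) :
    EmpP (n + 1) m F 0 ↔ IsPF m n (fun k => (F k).val) := by
  classical
  constructor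
  · intro hE
    have hne0 : ∀ k, F k ≠ 0 := by
      intro k hk
      have h1 := hE 1 (le_refl _) (by omega)
      have h2 : k ∈ Finset.univ.filter (fun k => ((0 : ZMod (n+1)) - F k).val < 1) := by
        simp [hk]
      have := Finset.card_pos.2 ⟨k, h2⟩
      omega
    have hval : ∀ k, 1 ≤ (F k).val ∧ (F k).val ≤ n := by
      intro k
      have h3 : (F k).val ≠ 0 := fun h => hne0 k ((ZMod.val_eq_zero _).1 h)
      have h4 := ZMod.val_lt (F k)
      omega
    refine ⟨fun k => hval k, ?_⟩
    intro i hi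
    show m + i ≤ (Finset.univ.filter (fun k => (F k).val ≤ i)).card + n
    have ht := hE (n + 1 - i) (by omega) (by omega)
    have hfe : (Finset.univ.filter (fun k => ((0 : ZMod (n+1)) - F k).val < n + 1 - i))
        = Finset.univ.filter (fun k => ¬ ((F k).val ≤ i)) := by
      apply Finset.filter_congr
      intro k _
      rw [zero_sub, ZMod.neg_val, if_neg (hne0 k)]
      have h1 := (hval k).1
      have h2 := (hval k).2
      simp only [eq_iff_iff, not_le]
      omega
    rw [hfe] at ht
    have hsp : (Finset.univ.filter (fun k => (F k).val ≤ i)).card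
        + (Finset.univ.filter (fun k => ¬ ((F k).val ≤ i))).card = m :=
      (my_split _ _ (fun a => Iff.rfl)).trans (by simp)
    omega
  · intro hP
    intro t ht1 ht2
    have hval : ∀ k, 1 ≤ (F k).val ∧ (F k).val ≤ n := fun k => hP.1 k
    have hne0 : ∀ k, F k ≠ 0 := by
      intro k hk
      have := (hval k).1
      rw [hk] at this
      simp [ZMod.val_zero] at this
    have hc := hP.2 (n + 1 - t) (by omega)
    have hc' : m + (n + 1 - t) ≤
        (Finset.univ.filter (fun k => (F k).val ≤ n + 1 - t)).card + n := hc
    have hfe : (Finset.univ.filter (fun k => ((0 : ZMod (n+1)) - F k).val < t))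
        = Finset.univ.filter (fun k => ¬ ((F k).val ≤ n + 1 - t)) := by
      apply Finset.filter_congr
      intro k _
      rw [zero_sub, ZMod.neg_val, if_neg (hne0 k)]
      have h1 := (hval k).1
      have h2 := (hval k).2
      simp only [eq_iff_iff, not_le]
      omega
    rw [hfe]
    have hsp : (Finset.univ.filter (fun k => (F k).val ≤ n + 1 - t)).card
        + (Finset.univ.filter (fun k => ¬ ((F k).val ≤ n + 1 - t))).card = m :=
      (my_split _ _ (fun a => Iff.rfl)).trans (by simp)
    omega

theorem card_PF (m n : ℕ) (hm : 1 ≤ m) (hmn : m ≤ n) :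
    {π : Fin m → ℕ | IsPF m n π}.ncard = (n - m + 1) * (n + 1) ^ (m - 1) := by
  classical
  set N := n + 1 with hNdef
  have hmN : m < N := by omega
  have hN0 : 0 < N := by omega
  haveI : NeZero N := ⟨by omega⟩
  set PFset : Finset (Fin m → ZMod N) := Finset.univ.filter (fun F => EmpP N m F 0)
    with hPFset
  -- identify the set of parking functions with the image of PFset
  have hinj : Function.Injective (fun (F : Fin m → ZMod N) => fun k => (F k).val) := by
    intro F1 F2 he
    funext k
    have : (F1 k).val = (F2 k).val := congrFun he k
    exact ZMod.val_injective N this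
  have hset : {π : Fin m → ℕ | IsPF m n π}
      = ↑(PFset.image (fun F => fun k => (F k).val)) := by
    ext π
    simp only [Set.mem_setOf_eq, Finset.coe_image, Set.mem_image, Finset.mem_coe,
      hPFset, Finset.mem_filter, Finset.mem_univ, true_and]
    constructor
    · intro hP
      refine ⟨fun k => (π k : ZMod N), ?_, ?_⟩
      · rw [emp_iff_isPF m n hmn]
        have he : (fun k => ((π k : ZMod N)).val) = π := by
          funext k
          exact ZMod.val_cast_of_lt (by have := (hP.1 k).2; omega)
        rw [he]
        exact hP
      · funext k
        exact ZMod.val_cast_of_lt (by have := (hP.1 k).2; omega)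
    · rintro ⟨F, hF, rfl⟩
      exact (emp_iff_isPF m n hmn F).1 hF
  rw [hset, Set.ncard_coe_finset, Finset.card_image_of_injective _ hinj]
  -- double counting
  have hL : ∀ F : Fin m → ZMod N,
      (Finset.univ.filter (fun a => EmpP N m F a)).card = N - m :=
    emp_card N m hmN
  have htrans : ∀ a : ZMod N,
      (Finset.univ.filter (fun F : Fin m → ZMod N => EmpP N m F a)).card = PFset.card := by
    intro a
    rw [hPFset]
    refine Finset.card_nbij' (fun F => fun k => F k - a) (fun G => fun k => G k + a)
      ?_ ?_ ?_ ?_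
    · intro F hF
      simp only [Finset.mem_coe, Finset.mem_filter, Finset.mem_univ, true_and] at hF ⊢
      intro t ht1 ht2
      have he : (Finset.univ.filter (fun k => ((0 : ZMod N) - (F k - a)).val < t))
          = Finset.univ.filter (fun k => (a - F k).val < t) := by
        apply Finset.filter_congr
        intro k _
        have : (0 : ZMod N) - (F k - a) = a - F k := by ring
        rw [this]
      rw [he]
      exact hF t ht1 ht2
    · intro G hG
      simp only [Finset.mem_coe, Finset.mem_filter, Finset.mem_univ, true_and] at hG ⊢
      intro t ht1 ht2
      have he : (Finset.univ.filter (fun k => (a - (G k + a)).val < t))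
          = Finset.univ.filter (fun k => ((0 : ZMod N) - G k).val < t) := by
        apply Finset.filter_congr
        intro k _
        have : a - (G k + a) = (0 : ZMod N) - G k := by ring
        rw [this]
      rw [he]
      exact hG t ht1 ht2
    · intro F _; funext k; show F k - a + a = F k; ring
    · intro G _; funext k; show G k + a - a = G k; ring
  have hsum1 : ∑ F : Fin m → ZMod N,
      (Finset.univ.filter (fun a => EmpP N m F a)).card
      = ∑ a : ZMod N, (Finset.univ.filter (fun F : Fin m → ZMod N => EmpP N m F a)).card := by
    simp only [Finset.card_filter]
    rw [Finset.sum_comm]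
  have hcardfun : Fintype.card (Fin m → ZMod N) = N ^ m := by
    rw [Fintype.card_fun]
    simp [ZMod.card]
  have hkey : PFset.card * N = (N - m) * N ^ m := by
    have h1 : ∑ F : Fin m → ZMod N,
        (Finset.univ.filter (fun a => EmpP N m F a)).card = N ^ m * (N - m) := by
      rw [Finset.sum_congr rfl (fun F _ => hL F), Finset.sum_const, Finset.card_univ,
        hcardfun, smul_eq_mul]
    have h2 : ∑ a : ZMod N, (Finset.univ.filter
        (fun F : Fin m → ZMod N => EmpP N m F a)).card = N * PFset.card := by
      rw [Finset.sum_congr rfl (fun a _ => htrans a), Finset.sum_const, Finset.card_univ,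
        ZMod.card, smul_eq_mul]
    rw [hsum1, h2] at h1
    calc PFset.card * N = N * PFset.card := Nat.mul_comm _ _
      _ = N ^ m * (N - m) := h1
      _ = (N - m) * N ^ m := Nat.mul_comm _ _
  have hpow : N ^ m = N ^ (m - 1) * N := by
    conv_lhs => rw [show m = (m - 1) + 1 by omega]
    rw [pow_succ]
  have hfinal : PFset.card = (N - m) * N ^ (m - 1) := by
    apply Nat.eq_of_mul_eq_mul_right hN0
    rw [hkey, hpow]
    ring
  rw [hfinal]
  congr 1
  omega
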